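/- Let X and Y be i.i.d. random variables with continuous distribution function F. Then |X| and |max(X,Y)| are identically distributed if and only if F is symmetric with respect to zero, i.e., 1 − F(x) − F(−x) = 0 for all x ∈ ℝ. -/

import Mathlib

open MeasureTheory ProbabilityTheory Filter Set Topology


open MeasureTheory ProbabilityTheory Filter Set Topology

/-- Real-analysis core of the Baringhaus–Henze argument. -/
lemma bh_key (F : ℝ → ℝ) (hmono : Monotone F) (hcont : Continuous F)
    (htop : Tendsto F atTop (nhds 1)) (hbot : Tendsto F atBot (nhds 0))
    (h : ∀ a : ℝ, 0 ≤ a → F a = F (-a) ∨ F a + F (-a) = 1) :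
    ∀ x : ℝ, F x + F (-x) = 1 := by
  -- Q is downward closed on [0, ∞)
  have hQdown : ∀ a b : ℝ, 0 ≤ b → b ≤ a → F a = F (-a) → F b = F (-b) := by
    intro a b hb hba hQ
    have h1 : F (-a) ≤ F (-b) := hmono (by linarith)
    have h2 : F (-b) ≤ F b := hmono (by linarith)
    have h3 : F b ≤ F a := hmono hba
    linarith
  -- S is nonempty
  have hSne : ∃ a : ℝ, 0 ≤ a ∧ F a ≠ F (-a) := by
    by_contra hcon
    push_neg at hcon
    have hconst : ∀ x : ℝ, F x = F 0 := by
      intro x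
      have h1 := hcon |x| (abs_nonneg x)
      have h2 : F (-|x|) ≤ F x := hmono (neg_abs_le x)
      have h3 : F x ≤ F |x| := hmono (le_abs_self x)
      have h4 : F (-|x|) ≤ F 0 := hmono (neg_nonpos_of_nonneg (abs_nonneg x))
      have h5 : F 0 ≤ F |x| := hmono (abs_nonneg x)
      linarith
    have heq : F = fun _ => F 0 := funext hconst
    have h1 : Tendsto F atTop (nhds (F 0)) := heq ▸ tendsto_const_nhds
    have h0 : Tendsto F atBot (nhds (F 0)) := heq ▸ tendsto_const_nhds
    have e1 : F 0 = 1 := tendsto_nhds_unique h1 htop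
    have e0 : F 0 = 0 := tendsto_nhds_unique h0 hbot
    linarith
  set S : Set ℝ := {a : ℝ | 0 ≤ a ∧ F a ≠ F (-a)} with hS
  obtain ⟨a₀, ha₀0, ha₀⟩ := hSne
  have hSne' : S.Nonempty := ⟨a₀, ha₀0, ha₀⟩
  have hbdd : BddBelow S := ⟨0, fun a ha => ha.1⟩
  set c := sInf S with hc
  have hc0 : 0 ≤ c := le_csInf hSne' fun a ha => ha.1
  have hPgt : ∀ a : ℝ, c < a → F a + F (-a) = 1 := by
    intro a ha
    obtain ⟨a₁, ha₁S, ha₁lt⟩ := exists_lt_of_csInf_lt hSne' ha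
    have hne : F a ≠ F (-a) := fun hq => ha₁S.2 (hQdown a a₁ ha₁S.1 ha₁lt.le hq)
    rcases h a (hc0.trans ha.le) with h1 | h1
    · exact absurd h1 hne
    · exact h1
  have hcontsum : Continuous fun a : ℝ => F a + F (-a) :=
    hcont.add (hcont.comp continuous_neg)
  have hPc : F c + F (-c) = 1 := by
    have h1 : Tendsto (fun a : ℝ => F a + F (-a)) (nhdsWithin c (Ioi c))
        (nhds (F c + F (-c))) := (hcontsum.tendsto c).mono_left nhdsWithin_le_nhds
    have h2 : Tendsto (fun a : ℝ => F a + F (-a)) (nhdsWithin c (Ioi c)) (nhds 1) := by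
      refine Tendsto.congr' ?_ tendsto_const_nhds
      filter_upwards [self_mem_nhdsWithin] with a ha
      exact (hPgt a ha).symm
    exact tendsto_nhds_unique h1 h2
  have hQlt : ∀ b : ℝ, 0 ≤ b → b < c → F b = F (-b) := by
    intro b hb hbc
    by_contra hne
    exact absurd (csInf_le hbdd ⟨hb, hne⟩) (not_le.mpr hbc)
  have hQc : F c = F (-c) ∨ c = 0 := by
    rcases eq_or_lt_of_le hc0 with hc0' | hc0'
    · exact Or.inr hc0'.symm
    · left
      have h1 : Tendsto (fun a : ℝ => F a - F (-a)) (nhdsWithin c (Iio c))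
          (nhds (F c - F (-c))) :=
        ((hcont.sub (hcont.comp continuous_neg)).tendsto c).mono_left nhdsWithin_le_nhds
      have h2 : Tendsto (fun a : ℝ => F a - F (-a)) (nhdsWithin c (Iio c)) (nhds 0) := by
        refine Tendsto.congr' ?_ tendsto_const_nhds
        have hmem : Ioo 0 c ∈ nhdsWithin c (Iio c) :=
          Ioo_mem_nhdsLT_of_mem ⟨hc0', le_rfl⟩
        filter_upwards [hmem] with a ha
        rw [hQlt a ha.1.le ha.2]; ring
      have := tendsto_nhds_unique h1 h2
      linarith
  have hP : ∀ a : ℝ, 0 ≤ a → F a + F (-a) = 1 := by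
    intro a ha
    rcases lt_trichotomy a c with hac | hac | hac
    · -- a < c: F c = F (-c) (c > 0 here), all values = 1/2
      have hcpos : F c = F (-c) := by
        rcases hQc with h1 | h1
        · exact h1
        · exact absurd (hac.trans_le (h1 ▸ le_rfl)) (not_lt.mpr ha)
      have hFc : F c = 1/2 := by linarith
      have hQa : F a = F (-a) := hQlt a ha hac
      have h1 : F (-c) ≤ F (-a) := hmono (by linarith)
      have h2 : F a ≤ F c := hmono hac.le
      linarith
    · rw [hac]; exact hPc
    · exact hPgt a hac
  intro x
  rcases le_or_gt 0 x with hx | hx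
  · exact hP x hx
  · have := hP (-x) (by linarith)
    rw [neg_neg] at this
    linarith

/-- Measure of a closed symmetric interval when the left endpoint is not an atom. -/
lemma bh_Icc (ρ : Measure ℝ) [IsFiniteMeasure ρ] {a : ℝ} (ha : 0 ≤ a) (hatom : ρ {-a} = 0) :
    ρ (Set.Icc (-a) a) = ENNReal.ofReal ((ρ (Set.Iic a)).toReal - (ρ (Set.Iic (-a))).toReal) := by
  have h1 : ρ (Set.Iic (-a)) + ρ (Set.Ioc (-a) a) = ρ (Set.Iic a) := by
    rw [← measure_union (Set.Iic_disjoint_Ioc le_rfl) measurableSet_Ioc,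
      Set.Iic_union_Ioc_eq_Iic (by linarith)]
  have hIccIoc : ρ (Set.Icc (-a) a) = ρ (Set.Ioc (-a) a) := by
    refine le_antisymm ?_ (measure_mono Set.Ioc_subset_Icc_self)
    calc ρ (Set.Icc (-a) a) ≤ ρ ({-a} ∪ Set.Ioc (-a) a) := by
          refine measure_mono fun t ht => ?_
          rcases eq_or_lt_of_le ht.1 with h | h
          · exact Or.inl h.symm
          · exact Or.inr ⟨h, ht.2⟩
      _ ≤ ρ {-a} + ρ (Set.Ioc (-a) a) := measure_union_le _ _
      _ = ρ (Set.Ioc (-a) a) := by rw [hatom, zero_add]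
  have h2 := congrArg ENNReal.toReal h1
  rw [ENNReal.toReal_add (measure_ne_top ρ _) (measure_ne_top ρ _)] at h2
  rw [hIccIoc, ← ENNReal.ofReal_toReal (measure_ne_top ρ (Set.Ioc (-a) a))]
  congr 1
  linarith



open MeasureTheory ProbabilityTheory

/-- **Baringhaus–Henze characterization of symmetry.** Let `X` and `Y` be i.i.d. random
variables with continuous distribution function `F`. Then `|X|` and `|max (X, Y)|` are
identically distributed iff `F` is symmetric about zero, i.e.
`1 - F x - F (-x) = 0` for all `x`. -/
theorem baringhaus_henze_characterization_symmetry
    {Ω : Type*} [MeasureSpace Ω] [IsProbabilityMeasure (ℙ : Measure Ω)]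
    (X Y : Ω → ℝ) (hX : Measurable X) (hY : Measurable Y)
    (hindep : IndepFun X Y ℙ) (hid : Measure.map Y ℙ = Measure.map X ℙ)
    (F : ℝ → ℝ) (hF : F = fun x => ((Measure.map X ℙ) (Set.Iic x)).toReal)
    (hcont : Continuous F) :
    Measure.map (fun ω => |X ω|) ℙ = Measure.map (fun ω => |max (X ω) (Y ω)|) ℙ ↔
      ∀ x : ℝ, 1 - F x - F (-x) = 0 := by
  set μ := Measure.map X ℙ with hμ
  have hμprob : IsProbabilityMeasure μ := Measure.isProbabilityMeasure_map hX.aemeasurable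
  have hMmeas : Measurable fun ω => max (X ω) (Y ω) := hX.max hY
  set ν := Measure.map (fun ω => max (X ω) (Y ω)) ℙ with hν
  have hνprob : IsProbabilityMeasure ν := Measure.isProbabilityMeasure_map hMmeas.aemeasurable
  have hFval : ∀ a : ℝ, F a = (μ (Set.Iic a)).toReal := fun a => by rw [hF]
  have hμIic : ∀ a : ℝ, μ (Set.Iic a) = ENNReal.ofReal (F a) := fun a => by
    rw [hFval, ENNReal.ofReal_toReal (measure_ne_top μ _)]
  have hFcdf : F = cdf μ := by
    funext a; rw [hFval, cdf_eq_real]; rfl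
  have hFmono : Monotone F := by rw [hFcdf]; exact monotone_cdf μ
  have hF0 : ∀ a, 0 ≤ F a := by rw [hFcdf]; exact fun a => cdf_nonneg μ a
  have htop : Filter.Tendsto F Filter.atTop (nhds 1) := by rw [hFcdf]; exact tendsto_cdf_atTop μ
  have hbot : Filter.Tendsto F Filter.atBot (nhds 0) := by rw [hFcdf]; exact tendsto_cdf_atBot μ
  -- μ has no atoms
  have hatom : ∀ x : ℝ, μ {x} = 0 := by
    intro x
    have hle : ∀ y : ℝ, y < x → (μ {x}).toReal ≤ F x - F y := by
      intro y hy
      have hsub : {x} ⊆ Set.Ioc y x := by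
        intro t ht
        rw [Set.mem_singleton_iff] at ht
        subst ht
        exact ⟨hy, le_rfl⟩
      have h1 : μ (Set.Iic y) + μ (Set.Ioc y x) = μ (Set.Iic x) := by
        rw [← measure_union (Set.Iic_disjoint_Ioc le_rfl) measurableSet_Ioc,
          Set.Iic_union_Ioc_eq_Iic hy.le]
      have h2 := congrArg ENNReal.toReal h1
      rw [ENNReal.toReal_add (measure_ne_top μ _) (measure_ne_top μ _)] at h2
      have h3 : (μ {x}).toReal ≤ (μ (Set.Ioc y x)).toReal :=
        ENNReal.toReal_mono (measure_ne_top μ _) (measure_mono hsub)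
      rw [hFval x, hFval y]
      linarith
    have hseq : Filter.Tendsto (fun n : ℕ => x - 1 / ((n : ℝ) + 1)) Filter.atTop (nhds x) := by
      have := tendsto_one_div_add_atTop_nhds_zero_nat (𝕜 := ℝ)
      have h := Filter.Tendsto.sub (tendsto_const_nhds (x := x)) this
      simpa using h
    have hlim : Filter.Tendsto (fun n : ℕ => F x - F (x - 1 / ((n : ℝ) + 1)))
        Filter.atTop (nhds 0) := by
      have := Filter.Tendsto.sub (tendsto_const_nhds (x := F x)) ((hcont.tendsto x).comp hseq)
      simpa using this
    have hnonneg : (μ {x}).toReal ≤ 0 := by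
      refine ge_of_tendsto hlim (Filter.Eventually.of_forall fun n => hle _ ?_)
      have : (0:ℝ) < 1 / ((n : ℝ) + 1) := by positivity
      linarith
    have : (μ {x}).toReal = 0 := le_antisymm hnonneg ENNReal.toReal_nonneg
    rcases (ENNReal.toReal_eq_zero_iff _).mp this with h | h
    · exact h
    · exact absurd h (measure_ne_top μ _)
  -- law of Y
  have hidY : ∀ s : Set ℝ, MeasurableSet s → ℙ (Y ⁻¹' s) = μ s := by
    intro s hs
    rw [← Measure.map_apply hY hs, hid]
  -- ν facts
  have hνIic : ∀ a : ℝ, ν (Set.Iic a) = ENNReal.ofReal (F a ^ 2) := by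
    intro a
    rw [hν, Measure.map_apply hMmeas measurableSet_Iic]
    have hset : (fun ω => max (X ω) (Y ω)) ⁻¹' Set.Iic a
        = X ⁻¹' Set.Iic a ∩ Y ⁻¹' Set.Iic a := by
      ext ω; simp [max_le_iff]
    rw [hset, hindep.measure_inter_preimage_eq_mul _ _ measurableSet_Iic measurableSet_Iic,
      ← Measure.map_apply hX measurableSet_Iic, hidY _ measurableSet_Iic, ← hμ, hμIic,
      ← ENNReal.ofReal_mul (hF0 a)]
    congr 1; ring
  have hνatom : ∀ x : ℝ, ν {x} = 0 := by
    intro x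
    rw [hν, Measure.map_apply hMmeas (measurableSet_singleton x)]
    have hsub : (fun ω => max (X ω) (Y ω)) ⁻¹' {x} ⊆ X ⁻¹' {x} ∪ Y ⁻¹' {x} := by
      intro ω hω
      simp only [Set.mem_preimage, Set.mem_singleton_iff, Set.mem_union] at hω ⊢
      rcases max_choice (X ω) (Y ω) with h | h
      · exact Or.inl (h ▸ hω)
      · exact Or.inr (h ▸ hω)
    refine measure_mono_null hsub (measure_union_null ?_ ?_)
    · rw [← Measure.map_apply hX (measurableSet_singleton x)]; exact hatom x
    · rw [hidY _ (measurableSet_singleton x)]; exact hatom x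
  -- the two Iic evaluations for a ≥ 0
  have habsX : ∀ a : ℝ, 0 ≤ a →
      Measure.map (fun ω => |X ω|) ℙ (Set.Iic a) = ENNReal.ofReal (F a - F (-a)) := by
    intro a ha
    rw [Measure.map_apply hX.abs measurableSet_Iic]
    have hset : (fun ω => |X ω|) ⁻¹' Set.Iic a = X ⁻¹' Set.Icc (-a) a := by
      ext ω; simp [abs_le]
    rw [hset, ← Measure.map_apply hX measurableSet_Icc, ← hμ,
      bh_Icc μ ha (hatom (-a)), ← hFval, ← hFval]
  have habsM : ∀ a : ℝ, 0 ≤ a →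
      Measure.map (fun ω => |max (X ω) (Y ω)|) ℙ (Set.Iic a)
        = ENNReal.ofReal (F a ^ 2 - F (-a) ^ 2) := by
    intro a ha
    rw [Measure.map_apply hMmeas.abs measurableSet_Iic]
    have hset : (fun ω => |max (X ω) (Y ω)|) ⁻¹' Set.Iic a
        = (fun ω => max (X ω) (Y ω)) ⁻¹' Set.Icc (-a) a := by
      ext ω; simp [abs_le]
    rw [hset, ← Measure.map_apply hMmeas measurableSet_Icc, ← hν,
      bh_Icc ν ha (hνatom (-a)), hνIic, hνIic,
      ENNReal.toReal_ofReal (by positivity), ENNReal.toReal_ofReal (by positivity)]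
  have habs_neg : ∀ (Z : Ω → ℝ), Measurable Z → ∀ a : ℝ, a < 0 →
      Measure.map (fun ω => |Z ω|) ℙ (Set.Iic a) = 0 := by
    intro Z hZ a ha
    rw [Measure.map_apply hZ.abs measurableSet_Iic]
    have hset : (fun ω => |Z ω|) ⁻¹' Set.Iic a = ∅ := by
      ext ω
      simp only [Set.mem_preimage, Set.mem_Iic, Set.mem_empty_iff_false, iff_false]
      exact not_le.mpr (ha.trans_le (abs_nonneg _))
    rw [hset, measure_empty]
  constructor
  · intro heq
    have hor : ∀ a : ℝ, 0 ≤ a → F a = F (-a) ∨ F a + F (-a) = 1 := by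
      intro a ha
      have h1 := habsX a ha
      rw [heq, habsM a ha] at h1
      have hmono' : F (-a) ≤ F a := hFmono (by linarith)
      rw [ENNReal.ofReal_eq_ofReal_iff (by nlinarith [hF0 a, hF0 (-a)]) (by linarith)] at h1
      have hfac : (F a - F (-a)) * (F a + F (-a) - 1) = 0 := by linear_combination h1
      rcases mul_eq_zero.mp hfac with h | h
      · left; linarith
      · right; linarith
    have hsym := bh_key F hFmono hcont htop hbot hor
    intro x
    linarith [hsym x]
  · intro hsym
    refine Measure.ext_of_Iic _ _ fun a => ?_
    rcases le_or_gt 0 a with ha | ha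
    · rw [habsX a ha, habsM a ha]
      congr 1
      linear_combination (F a - F (-a)) * hsym a
    · rw [habs_neg X hX a ha, habs_neg _ hMmeas a ha]
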